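/- Let u >= 0 be an integer, k >= 3 an integer, d in {2,3,4}, and z a complex number with |z| > u + k + 2. Then |z + u| > 1 + (d-1)/|z + u + 3 - d| + (k+1)!/(|z+u+k+1| * |z+u+k| * ... * |z+u+3| * |z+u+3-d|). -/

import Mathlib

lemma prod_range_id_succ (n : ℕ) : ∏ j ∈ Finset.range n, (j + 1) = n.factorial := by
  induction n with
  | zero => simp
  | succ n ih => rw [Finset.prod_range_succ, ih, Nat.factorial_succ, Nat.mul_comm]

lemma prodId (k : ℕ) (hk : 3 ≤ k) :
    ∏ j ∈ Finset.Icc 3 (k + 1), (k + 2 - j) = Nat.factorial (k - 1) := by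
  have h1 : Finset.Icc 3 (k + 1) = Finset.Ico 3 (k + 2) := by
    rw [show k + 2 = k + 1 + 1 from rfl, Finset.Ico_add_one_right_eq_Icc]
  rw [h1, Finset.prod_Ico_eq_prod_range]
  have h2 : k + 2 - 3 = k - 1 := by omega
  rw [h2]
  calc ∏ i ∈ Finset.range (k - 1), (k + 2 - (3 + i))
      = ∏ i ∈ Finset.range (k - 1), ((fun j => j + 1) (k - 1 - 1 - i)) := by
        apply Finset.prod_congr rfl
        intro i hi
        simp only [Finset.mem_range] at hi
        show k + 2 - (3 + i) = k - 1 - 1 - i + 1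
        omega
    _ = ∏ j ∈ Finset.range (k - 1), (j + 1) := Finset.prod_range_reflect (fun j => j + 1) (k - 1)
    _ = (k - 1).factorial := prod_range_id_succ (k - 1)

theorem stmt_16 (u k d : ℕ) (hk : 3 ≤ k) (hd : d = 2 ∨ d = 3 ∨ d = 4)
    (z : ℂ) (hz : ‖z‖ > (u : ℝ) + k + 2) :
    ‖(z + (u : ℂ))‖ >
      1 + ((d : ℝ) - 1) / ‖(z + (u : ℂ) + 3 - (d : ℂ))‖ +
        (Nat.factorial (k + 1) : ℝ) /
          ((∏ j ∈ Finset.Icc 3 (k + 1), ‖(z + (u : ℂ) + (j : ℂ))‖) *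
            ‖(z + (u : ℂ) + 3 - (d : ℂ))‖) := by
  have key : ∀ c : ℂ, ‖z‖ - ‖c‖ ≤ ‖(z + c)‖ := fun c => by
    simpa [sub_eq_add_neg] using norm_sub_norm_le z (-c)
  have hkR : (3 : ℝ) ≤ k := by exact_mod_cast hk
  set A := ‖(z + (u : ℂ))‖ with hAdef
  set B := ‖(z + (u : ℂ) + 3 - (d : ℂ))‖ with hBdef
  set P := ∏ j ∈ Finset.Icc 3 (k + 1), ‖(z + (u : ℂ) + (j : ℂ))‖ with hPdef
  -- A > k + 2
  have hA : (k : ℝ) + 2 < A := by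
    have h1 := key (u : ℂ)
    rw [Complex.norm_natCast] at h1
    linarith
  -- B > k + 1
  have habs3d : ‖((3 : ℂ) - (d : ℂ))‖ ≤ 1 := by
    rcases hd with rfl | rfl | rfl <;> norm_num
  have hB : (k : ℝ) + 1 < B := by
    have h1 := key ((u : ℂ) + 3 - (d : ℂ))
    have h2 : ‖((u : ℂ) + 3 - (d : ℂ))‖ ≤ (u : ℝ) + 1 := by
      calc ‖((u : ℂ) + 3 - (d : ℂ))‖ = ‖((u : ℂ) + ((3 : ℂ) - (d : ℂ)))‖ := by
            ring_nf
        _ ≤ ‖(u : ℂ)‖ + ‖((3 : ℂ) - (d : ℂ))‖ := norm_add_le _ _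
        _ ≤ (u : ℝ) + 1 := by rw [Complex.norm_natCast]; linarith
    have h3 : z + (u : ℂ) + 3 - (d : ℂ) = z + ((u : ℂ) + 3 - (d : ℂ)) := by ring
    rw [hBdef, h3]
    linarith
  have hBpos : 0 < B := by linarith [Nat.cast_nonneg (α := ℝ) k]
  -- product lower bound
  have hP : ((k - 1).factorial : ℝ) ≤ P := by
    calc ((k - 1).factorial : ℝ) = ∏ j ∈ Finset.Icc 3 (k + 1), ((k + 2 - j : ℕ) : ℝ) := by
          rw [← Nat.cast_prod, prodId k hk]
      _ ≤ P := by
          apply Finset.prod_le_prod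
          · intro j _; positivity
          · intro j hj
            simp only [Finset.mem_Icc] at hj
            have h1 := key ((u : ℂ) + (j : ℂ))
            have h2 : ‖((u : ℂ) + (j : ℂ))‖ = (u : ℝ) + j := by
              rw [← Nat.cast_add, Complex.norm_natCast, Nat.cast_add]
            have h3 : ((k + 2 - j : ℕ) : ℝ) = (k : ℝ) + 2 - j := by
              have : j ≤ k + 2 := by omega
              push_cast [Nat.cast_sub this]
              ring
            have h4 : z + (u : ℂ) + (j : ℂ) = z + ((u : ℂ) + (j : ℂ)) := by ring
            rw [h4, h3]
            rw [h2] at h1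
            linarith
  have hfacpos : (0 : ℝ) < ((k - 1).factorial : ℝ) := by exact_mod_cast (k - 1).factorial_pos
  have hPpos : 0 < P := lt_of_lt_of_le hfacpos hP
  -- first term: (d-1)/B ≤ 3/(k+1)
  have hkpos : (0 : ℝ) < (k : ℝ) + 1 := by linarith
  have hd1 : (0 : ℝ) ≤ (d : ℝ) - 1 := by rcases hd with rfl | rfl | rfl <;> norm_num
  have hd3 : (d : ℝ) - 1 ≤ 3 := by rcases hd with rfl | rfl | rfl <;> norm_num
  have h1 : ((d : ℝ) - 1) / B ≤ 3 / ((k : ℝ) + 1) := by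
    apply div_le_div₀ (by norm_num) hd3 hkpos hB.le
  have h1' : 3 / ((k : ℝ) + 1) ≤ 3 / 4 := by
    rw [div_le_div_iff₀ hkpos (by norm_num)]
    linarith
  -- second term
  have hmul : ((k - 1).factorial : ℝ) * ((k : ℝ) + 1) < P * B := by
    calc ((k - 1).factorial : ℝ) * ((k : ℝ) + 1) ≤ P * ((k : ℝ) + 1) := by
          apply mul_le_mul_of_nonneg_right hP hkpos.le
      _ < P * B := by exact mul_lt_mul_of_pos_left hB hPpos
  have hmulpos : (0 : ℝ) < ((k - 1).factorial : ℝ) * ((k : ℝ) + 1) := by positivity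
  have h2 : ((k + 1).factorial : ℝ) / (P * B) <
      ((k + 1).factorial : ℝ) / (((k - 1).factorial : ℝ) * ((k : ℝ) + 1)) := by
    apply div_lt_div_of_pos_left _ hmulpos hmul
    exact_mod_cast (k + 1).factorial_pos
  have hfac : ((k + 1).factorial : ℝ) = ((k : ℝ) + 1) * ((k : ℝ) * ((k - 1).factorial : ℝ)) := by
    have hknat : k.factorial = k * (k - 1).factorial := by
      have h : k - 1 + 1 = k := by omega
      rw [← h, Nat.factorial_succ, h]
    rw [Nat.factorial_succ, hknat]
    push_cast
    ring
  have h3 : ((k + 1).factorial : ℝ) / (((k - 1).factorial : ℝ) * ((k : ℝ) + 1)) = (k : ℝ) := by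
    rw [hfac]
    field_simp
  rw [h3] at h2
  linarith
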